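/- Let H be a connected r-uniform hypergraph whose longest Berge-path and longest Berge-cycle both have length ℓ-1, and let C be a Berge-cycle of length ℓ-1 with defining vertices v_1,...,v_{ℓ-1} and defining hyperedges e_1,...,e_{ℓ-1} with v_i, v_{i+1} ∈ e_i (mod ℓ-1). If there exists a vertex v outside the defining vertices of C and distinct hyperedges h_1, h_2 of H not among the defining hyperedges of C with v, v_{i-1} ∈ h_1 and v, v_{i+1} ∈ h_2, then H contains a Berge-cycle of length ℓ-1 that does not have v_i among its defining vertices. -/
import Mathlib


def IsBergePath {V : Type*} (H : Finset (Finset V)) (t : ℕ)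
    (v : Fin (t+1) → V) (e : Fin t → Finset V) : Prop :=
  Function.Injective v ∧ Function.Injective e ∧ (∀ i, e i ∈ H) ∧
    ∀ i : Fin t, v i.castSucc ∈ e i ∧ v i.succ ∈ e i

def HasBergePath {V : Type*} (H : Finset (Finset V)) (t : ℕ) : Prop :=
  ∃ v e, IsBergePath H t v e

def cnext {t : ℕ} (i : Fin t) : Fin t := ⟨(i.1 + 1) % t, Nat.mod_lt _ i.pos⟩

def cprev {t : ℕ} (i : Fin t) : Fin t := ⟨(i.1 + t - 1) % t, Nat.mod_lt _ i.pos⟩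

def IsBergeCycle {V : Type*} (H : Finset (Finset V)) (t : ℕ)
    (v : Fin t → V) (e : Fin t → Finset V) : Prop :=
  Function.Injective v ∧ Function.Injective e ∧ (∀ i, e i ∈ H) ∧
    ∀ i : Fin t, v i ∈ e i ∧ v (cnext i) ∈ e i

def HasBergeCycle {V : Type*} (H : Finset (Finset V)) (t : ℕ) : Prop :=
  ∃ v e, IsBergeCycle H t v e

def BergeConnected {V : Type*} (H : Finset (Finset V)) : Prop :=
  ∀ x y : V, x ≠ y → ∃ t v e, IsBergePath H t v e ∧ v 0 = x ∧ v (Fin.last t) = y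


lemma cnext_cprev_aux {t : ℕ} (i : Fin t) : cnext (cprev i) = i := by
  have ht := i.pos
  have hi := i.2
  apply Fin.ext
  simp only [cnext, cprev]
  rcases Nat.eq_zero_or_pos i.1 with h | h
  · have h1 : (i.1 + t - 1) % t = t - 1 := by
      rw [h, Nat.zero_add, Nat.mod_eq_of_lt (by omega)]
    rw [h1]
    have : t - 1 + 1 = t := by omega
    rw [this, Nat.mod_self, h]
  · have h1 : (i.1 + t - 1) % t = i.1 - 1 := by
      have : i.1 + t - 1 = (i.1 - 1) + t := by omega
      rw [this, Nat.add_mod_right, Nat.mod_eq_of_lt (by omega)]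
    rw [h1]
    have : i.1 - 1 + 1 = i.1 := by omega
    rw [this, Nat.mod_eq_of_lt hi]

lemma cprev_cnext_aux {t : ℕ} (i : Fin t) : cprev (cnext i) = i := by
  have ht := i.pos
  have hi := i.2
  apply Fin.ext
  simp only [cnext, cprev]
  rcases Nat.lt_or_ge (i.1 + 1) t with h | h
  · have h1 : (i.1 + 1) % t = i.1 + 1 := Nat.mod_eq_of_lt h
    rw [h1]
    have : i.1 + 1 + t - 1 = i.1 + t := by omega
    rw [this, Nat.add_mod_right, Nat.mod_eq_of_lt hi]
  · have hit : i.1 + 1 = t := by omega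
    have h1 : (i.1 + 1) % t = 0 := by rw [hit, Nat.mod_self]
    rw [h1]
    have : 0 + t - 1 = i.1 := by omega
    rw [this, Nat.mod_eq_of_lt hi]

/-- Lemma 8 (iii): if a vertex `v` outside the defining vertices of a longest
Berge-cycle `C` lies in distinct non-defining hyperedges `h₁, h₂` with
`v_{i-1} ∈ h₁` and `v_{i+1} ∈ h₂`, then `H` contains a Berge-cycle of length `ℓ-1`
not containing `vᵢ` as a defining vertex. -/
theorem replace_cycle_vertex {V : Type*} [Fintype V] [DecidableEq V]
    (H : Finset (Finset V)) (r ℓ : ℕ) (hℓ : 2 ≤ ℓ)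
    (hunif : ∀ h ∈ H, h.card = r)
    (hconn : BergeConnected H)
    (hpath : HasBergePath H (ℓ - 1)) (hpathmax : ∀ m, HasBergePath H m → m ≤ ℓ - 1)
    (hcycmax : ∀ m, HasBergeCycle H m → m ≤ ℓ - 1)
    (v : Fin (ℓ - 1) → V) (e : Fin (ℓ - 1) → Finset V)
    (hC : IsBergeCycle H (ℓ - 1) v e)
    (u : V) (hu : u ∉ Set.range v)
    (h₁ h₂ : Finset V) (i : Fin (ℓ - 1))
    (hh₁ : h₁ ∈ H) (hh₂ : h₂ ∈ H) (hne : h₁ ≠ h₂)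
    (hnd₁ : ∀ j, h₁ ≠ e j) (hnd₂ : ∀ j, h₂ ≠ e j)
    (hm₁ : u ∈ h₁) (hv₁ : v (cprev i) ∈ h₁)
    (hm₂ : u ∈ h₂) (hv₂ : v (cnext i) ∈ h₂) :
    ∃ (v' : Fin (ℓ - 1) → V) (e' : Fin (ℓ - 1) → Finset V),
      IsBergeCycle H (ℓ - 1) v' e' ∧ ∀ j, v' j ≠ v i := by
  obtain ⟨hvinj, heinj, heH, hinc⟩ := hC
  refine ⟨fun j => if j = i then u else v j,
    fun j => if j = cprev i then h₁ else if j = i then h₂ else e j, ⟨?_, ?_, ?_, ?_⟩, ?_⟩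
  · -- injectivity of v'
    intro a b hab
    dsimp only at hab
    rcases eq_or_ne a i with ha | ha <;> rcases eq_or_ne b i with hb | hb
    · rw [ha, hb]
    · rw [if_pos ha, if_neg hb] at hab
      exact absurd ⟨b, hab.symm⟩ hu
    · rw [if_neg ha, if_pos hb] at hab
      exact absurd ⟨a, hab⟩ hu
    · rw [if_neg ha, if_neg hb] at hab
      exact hvinj hab
  · -- injectivity of e'
    intro a b hab
    dsimp only at hab
    rcases eq_or_ne a (cprev i) with ha | ha <;> rcases eq_or_ne b (cprev i) with hb | hb
    · rw [ha, hb]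
    · rw [if_pos ha, if_neg hb] at hab
      rcases eq_or_ne b i with hb2 | hb2
      · rw [if_pos hb2] at hab; exact absurd hab hne
      · rw [if_neg hb2] at hab; exact absurd hab (hnd₁ b)
    · rw [if_neg ha, if_pos hb] at hab
      rcases eq_or_ne a i with ha2 | ha2
      · rw [if_pos ha2] at hab; exact absurd hab.symm hne
      · rw [if_neg ha2] at hab; exact absurd hab.symm (hnd₁ a)
    · rw [if_neg ha, if_neg hb] at hab
      rcases eq_or_ne a i with ha2 | ha2 <;> rcases eq_or_ne b i with hb2 | hb2
      · rw [ha2, hb2]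
      · rw [if_pos ha2, if_neg hb2] at hab; exact absurd hab (hnd₂ b)
      · rw [if_neg ha2, if_pos hb2] at hab; exact absurd hab.symm (hnd₂ a)
      · rw [if_neg ha2, if_neg hb2] at hab; exact heinj hab
  · -- membership
    intro j
    dsimp only
    rcases eq_or_ne j (cprev i) with h | h
    · rw [if_pos h]; exact hh₁
    · rw [if_neg h]
      rcases eq_or_ne j i with h2 | h2
      · rw [if_pos h2]; exact hh₂
      · rw [if_neg h2]; exact heH j
  · -- incidence
    intro j
    dsimp only
    rcases eq_or_ne j (cprev i) with h | h
    · subst h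
      rw [if_pos rfl, cnext_cprev_aux, if_pos rfl]
      refine ⟨?_, hm₁⟩
      split
      · exact hm₁
      · exact hv₁
    · rcases eq_or_ne j i with h2 | h2
      · subst h2
        have hcn : cnext j ≠ j := fun hc =>
          h ((cprev_cnext_aux j).symm.trans (by rw [hc]))
        rw [if_neg h, if_pos rfl, if_pos rfl, if_neg hcn]
        exact ⟨hm₂, hv₂⟩
      · have hcn : cnext j ≠ i := by
          intro hc
          apply h
          rw [← hc, cprev_cnext_aux]
        rw [if_neg h, if_neg h2, if_neg h2, if_neg hcn]
        exact hinc j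
  · -- avoids v i
    intro j
    dsimp only
    rcases eq_or_ne j i with h | h
    · rw [if_pos h]; exact fun hc => hu ⟨i, hc.symm⟩
    · rw [if_neg h]; exact fun hc => h (hvinj hc)
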